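/- For every positive integer p, the p×p Hankel determinant of the moments of the standard Gaussian weight equals Π_{j=0}^{p−1} j!; that is, det_{0≤i,j<p}( (1/√(2π)) ∫_ℝ x^{i+j} e^{−x²/2} dx ) = Π_{j=0}^{p−1} j!. -/

import Mathlib

open scoped BigOperators
open MeasureTheory

namespace Stmt9Aux

open Polynomial Real

/-- The Gaussian weight. -/
noncomputable def Gw : ℝ → ℝ := fun x => Real.exp (-(x^2/2))

lemma Gw_int_mono (n : ℕ) : Integrable fun x : ℝ => x ^ n * Gw x := by
  have h := integrable_rpow_mul_exp_neg_mul_sq (b := (1:ℝ)/2) (by norm_num)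
    (s := (n:ℝ)) (lt_of_lt_of_le (by norm_num) (Nat.cast_nonneg n))
  have e : (fun x : ℝ => x ^ (n:ℝ) * Real.exp (-(1/2) * x^2)) = fun x : ℝ => x ^ n * Gw x := by
    funext x
    rw [Real.rpow_natCast]
    unfold Gw
    congr 1
    ring
  rwa [e] at h

lemma Gw_int_poly (P : ℝ[X]) : Integrable fun x : ℝ => P.eval x * Gw x := by
  induction P using Polynomial.induction_on' with
  | add p q hp hq => simpa only [eval_add, add_mul, Pi.add_def] using hp.add hq
  | monomial n a => simpa [eval_monomial, mul_assoc] using (Gw_int_mono n).const_mul a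

lemma Gw_form (j : ℕ) :
    deriv^[j] Gw = fun x => (-1:ℝ)^j * aeval x (Polynomial.hermite j) * Gw x :=
  funext fun x => Polynomial.deriv_gaussian_eq_hermite_mul_gaussian j x

lemma Gw_diff : Differentiable ℝ Gw :=
  Real.differentiable_exp.comp (((differentiable_pow 2).div_const 2).neg)

lemma Gw_hasDeriv (j : ℕ) (x : ℝ) : HasDerivAt (deriv^[j] Gw) (deriv^[j+1] Gw x) x := by
  have hd : Differentiable ℝ (deriv^[j] Gw) := by
    rw [Gw_form]
    exact ((differentiable_const _).mul
      (Polynomial.differentiable_aeval (Polynomial.hermite j))).mul Gw_diff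
  rw [Function.iterate_succ_apply']
  exact (hd x).hasDerivAt

lemma aeval_eq (q : ℤ[X]) (x : ℝ) : aeval x q = (q.map (Int.castRingHom ℝ)).eval x := by
  rw [Polynomial.aeval_def, algebraMap_int_eq, ← Polynomial.eval_map]

lemma Gw_int_poly_mul (c : ℝ) (P Q : ℝ[X]) :
    Integrable fun x : ℝ => P.eval x * (c * Q.eval x * Gw x) := by
  have h := (Gw_int_poly (P * Q)).const_mul c
  have e : (fun x : ℝ => c * ((P*Q).eval x * Gw x))
      = fun x => P.eval x * (c * Q.eval x * Gw x) := by
    funext x; simp only [eval_mul]; ring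
  rwa [e] at h

lemma Gw_int_poly_hermite (c : ℝ) (P : ℝ[X]) (j : ℕ) :
    Integrable fun x : ℝ => P.eval x * (c * aeval x (Polynomial.hermite j) * Gw x) := by
  simpa only [aeval_eq] using
    Gw_int_poly_mul c P ((Polynomial.hermite j).map (Int.castRingHom ℝ))

lemma Gw_int_poly_deriv (P : ℝ[X]) (j : ℕ) :
    Integrable fun x : ℝ => P.eval x * deriv^[j] Gw x := by
  simp only [Gw_form]
  exact Gw_int_poly_hermite _ P j

lemma Gw_ibp (P : ℝ[X]) (j : ℕ) :
    ∫ x : ℝ, P.eval x * deriv^[j+1] Gw x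
      = - ∫ x : ℝ, (derivative P).eval x * deriv^[j] Gw x := by
  apply MeasureTheory.integral_mul_deriv_eq_deriv_mul_of_integrable
    (u := fun x => P.eval x) (u' := fun x => (derivative P).eval x)
    (v := deriv^[j] Gw) (v' := fun x => deriv^[j+1] Gw x)
  · exact fun x _ => P.hasDerivAt x
  · exact fun x _ => Gw_hasDeriv j x
  · simpa only [Pi.mul_def] using Gw_int_poly_deriv P (j+1)
  · simpa only [Pi.mul_def] using Gw_int_poly_deriv (derivative P) j
  · simpa only [Pi.mul_def] using Gw_int_poly_deriv P j

lemma Gw_key (j : ℕ) (P : ℝ[X]) :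
    ∫ x : ℝ, P.eval x * deriv^[j] Gw x
      = (-1:ℝ)^j * ∫ x : ℝ, (derivative^[j] P).eval x * Gw x := by
  induction j generalizing P with
  | zero => simp
  | succ j ih =>
    rw [Gw_ibp P j, ih (derivative P), ← Function.iterate_succ_apply]
    ring

lemma Gw_integral : ∫ x : ℝ, Gw x = Real.sqrt (2*Real.pi) := by
  have h := integral_gaussian (1/2)
  have e : (fun x : ℝ => Real.exp (-(1/2) * x^2)) = Gw := by
    funext x; unfold Gw; congr 1; ring
  rw [e] at h
  rw [h]
  congr 1
  field_simp

lemma Nval (n j : ℕ) :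
    ∫ x : ℝ, x^n * aeval x (Polynomial.hermite j) * Gw x
      = ∫ x : ℝ, (derivative^[j] ((X:ℝ[X])^n)).eval x * Gw x := by
  have hsq : ((-1:ℝ)^j) * ((-1:ℝ)^j) = 1 := by
    rw [← pow_add]; exact Even.neg_one_pow ⟨j, rfl⟩
  have h1 : ∫ x : ℝ, x^n * aeval x (Polynomial.hermite j) * Gw x
      = (-1:ℝ)^j * ∫ x : ℝ, ((X:ℝ[X])^n).eval x * deriv^[j] Gw x := by
    rw [← MeasureTheory.integral_const_mul]
    congr 1; funext x
    simp only [Gw_form, eval_pow, eval_X]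
    rw [show (-1:ℝ)^j * (x ^ n * ((-1:ℝ)^j * (aeval x (Polynomial.hermite j)) * Gw x))
        = (((-1:ℝ)^j) * ((-1:ℝ)^j)) * (x ^ n * (aeval x (Polynomial.hermite j)) * Gw x) from by
          ring, hsq, one_mul]
  rw [h1, Gw_key, ← mul_assoc, hsq, one_mul]

lemma Nzero {n j : ℕ} (h : n < j) :
    ∫ x : ℝ, x^n * aeval x (Polynomial.hermite j) * Gw x = 0 := by
  rw [Nval, Polynomial.iterate_derivative_eq_zero (by simpa using h)]
  simp

lemma Ndiag (n : ℕ) :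
    ∫ x : ℝ, x^n * aeval x (Polynomial.hermite n) * Gw x
      = (n.factorial : ℝ) * Real.sqrt (2*Real.pi) := by
  rw [Nval, Polynomial.iterate_derivative_X_pow_eq_C_mul]
  simp [Nat.descFactorial_self, MeasureTheory.integral_const_mul, Gw_integral]

end Stmt9Aux

/-- The Hankel determinant of the moments of the standard Gaussian weight:
`det_{0≤i,j<p}( (1/√(2π)) ∫ x^{i+j} e^{-x²/2} dx ) = Π_{j<p} j!`. -/
theorem stmt9 (p : ℕ) (hp : 0 < p) :
    Matrix.det (Matrix.of fun i j : Fin p =>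
        (Real.sqrt (2*Real.pi))⁻¹ * ∫ x : ℝ, x^((i : ℕ)+(j : ℕ)) * Real.exp (-x^2/2)) =
      ∏ j ∈ Finset.range p, (j.factorial : ℝ) := by
  classical
  open Polynomial Stmt9Aux in
  set s := Real.sqrt (2*Real.pi) with hs_def
  have hs : 0 < s := Real.sqrt_pos.mpr (by positivity)
  set M : Matrix (Fin p) (Fin p) ℝ :=
    Matrix.of (fun i j : Fin p => ∫ x : ℝ, x^((i:ℕ)+(j:ℕ)) * Gw x) with hM_def
  set C : Matrix (Fin p) (Fin p) ℝ :=
    Matrix.of (fun j k : Fin p => ((Polynomial.hermite (j:ℕ)).coeff (k:ℕ) : ℝ)) with hC_def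
  set N : Matrix (Fin p) (Fin p) ℝ :=
    Matrix.of (fun i j : Fin p =>
      ∫ x : ℝ, x^(i:ℕ) * aeval x (Polynomial.hermite (j:ℕ)) * Gw x) with hN_def
  have hmat : (Matrix.of fun i j : Fin p =>
      (Real.sqrt (2*Real.pi))⁻¹ * ∫ x : ℝ, x^((i:ℕ)+(j:ℕ)) * Real.exp (-x^2/2)) = s⁻¹ • M := by
    ext i j
    simp only [Matrix.smul_apply, Matrix.of_apply, smul_eq_mul, hM_def, Gw, neg_div, hs_def]
  have hMC : M * C.transpose = N := by
    ext i j
    rw [Matrix.mul_apply]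
    have hint : ∀ k : Fin p, Integrable fun x : ℝ =>
        x^(i:ℕ) * (((Polynomial.hermite (j:ℕ)).coeff (k:ℕ) : ℝ) * x^(k:ℕ)) * Gw x := by
      intro k
      have h := (Gw_int_mono ((i:ℕ)+(k:ℕ))).const_mul
        (((Polynomial.hermite (j:ℕ)).coeff (k:ℕ) : ℝ))
      have e : (fun x : ℝ => ((Polynomial.hermite (j:ℕ)).coeff (k:ℕ) : ℝ)
            * (x^((i:ℕ)+(k:ℕ)) * Gw x))
          = fun x : ℝ => x^(i:ℕ) * (((Polynomial.hermite (j:ℕ)).coeff (k:ℕ) : ℝ) * x^(k:ℕ))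
            * Gw x := by
        funext x; rw [pow_add]; ring
      rwa [e] at h
    have step1 : ∀ k : Fin p, M i k * C.transpose k j
        = ∫ x : ℝ, x^(i:ℕ) * (((Polynomial.hermite (j:ℕ)).coeff (k:ℕ) : ℝ) * x^(k:ℕ)) * Gw x := by
      intro k
      rw [Matrix.transpose_apply, hM_def, hC_def]
      simp only [Matrix.of_apply]
      rw [← MeasureTheory.integral_mul_const]
      congr 1; funext x; rw [pow_add]; ring
    rw [Finset.sum_congr rfl fun k _ => step1 k,
      ← MeasureTheory.integral_finset_sum _ (fun k _ => hint k)]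
    simp only [hN_def, Matrix.of_apply]
    congr 1; funext x
    rw [← Finset.sum_mul]
    rw [← Finset.mul_sum]
    congr 2
    have hdeg : ((Polynomial.hermite (j:ℕ)).map (Int.castRingHom ℝ)).natDegree < p := by
      rw [(Polynomial.hermite_monic (j:ℕ)).natDegree_map, Polynomial.natDegree_hermite]
      exact j.isLt
    rw [aeval_eq, Polynomial.eval_eq_sum_range' hdeg,
      Fin.sum_univ_eq_sum_range (fun k => (((Polynomial.hermite (j:ℕ)).coeff k : ℝ) * x ^ k))]
    refine Finset.sum_congr rfl fun k _ => ?_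
    rw [Polynomial.coeff_map]
    rfl
  have hNtri : N.BlockTriangular OrderDual.toDual := by
    intro a b h
    exact Nzero (show (a:ℕ) < (b:ℕ) from h)
  have hdetN : N.det = ∏ i : Fin p, (((i:ℕ).factorial : ℝ) * s) := by
    rw [Matrix.det_of_lowerTriangular N hNtri]
    exact Finset.prod_congr rfl fun i _ => Ndiag (i:ℕ)
  have hCtri : C.BlockTriangular OrderDual.toDual := by
    intro a b h
    simp only [hC_def, Matrix.of_apply]
    rw [Polynomial.coeff_hermite_of_lt (show (a:ℕ) < (b:ℕ) from h)]
    simp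
  have hdetC : C.det = 1 := by
    rw [Matrix.det_of_lowerTriangular C hCtri]
    refine Finset.prod_eq_one fun i _ => ?_
    simp [hC_def, Polynomial.coeff_hermite_self]
  have hdetM : M.det = ∏ i : Fin p, (((i:ℕ).factorial : ℝ) * s) := by
    have h := congrArg Matrix.det hMC
    rwa [Matrix.det_mul, Matrix.det_transpose, hdetC, mul_one, hdetN] at h
  rw [hmat, Matrix.det_smul, hdetM, Finset.prod_mul_distrib, Fintype.card_fin,
    Finset.prod_const, Finset.card_univ, Fintype.card_fin,
    Fin.prod_univ_eq_prod_range (fun i => ((i.factorial : ℝ)))]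
  have hsp : s ^ p ≠ 0 := pow_ne_zero _ (ne_of_gt hs)
  field_simp
  rw [div_pow, one_pow, div_mul_cancel₀ _ hsp]
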